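/- Let ℓ be a prime power and K = F_{ℓ^6}. For any a, b, c, d, e, f ∈ K not all zero (defining a conic C: aX² + bY² + cXY + dX + eY + f = 0) such that the conic does not contain the Hermitian-type curve H: Y^(ℓ+1) = X^ℓ + X as a component, the number of common solutions (x,y) ∈ K² of the two equations is at most 2(ℓ+1). -/

import Mathlib

section helpers
open Polynomial
variable {K : Type*} [Field K]

lemma uH_natDegree {K : Type*} [Field K] {q : ℕ} (hq : 2 ≤ q) :
    (X^q + X : K[X]).natDegree = q := by
  rw [natDegree_add_eq_left_of_natDegree_lt] <;> simp [natDegree_X_pow] <;> omega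

lemma uH_ne_zero {K : Type*} [Field K] {q : ℕ} (hq : 2 ≤ q) :
    (X^q + X : K[X]) ≠ 0 := by
  intro h
  have := uH_natDegree (K := K) hq
  rw [h] at this; simp at this; omega

lemma lemA {K : Type*} [Field K] {q k : ℕ} (hq : 2 ≤ q) (hk : k = 1 ∨ k = 2)
    (β : RatFunc K)
    (h : β ^ (q+1) = algebraMap K[X] (RatFunc K) ((X^q + X)^k)) : False := by
  have hne : ((X^q + X : K[X]))^k ≠ 0 := pow_ne_zero _ (uH_ne_zero hq)
  have hβ : β ≠ 0 := by
    intro h0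
    rw [h0, zero_pow (by omega)] at h
    exact hne ((map_eq_zero_iff _ (IsFractionRing.injective K[X] (RatFunc K))).mp h.symm)
  have hpow : ∀ n : ℕ, RatFunc.intDegree (β ^ n) = n * β.intDegree := by
    intro n
    induction n with
    | zero => simp
    | succ n ih =>
      rw [pow_succ, RatFunc.intDegree_mul (pow_ne_zero _ hβ) hβ, ih]
      push_cast; ring
  have h1 : ((q:ℤ)+1) * β.intDegree = (k:ℤ) * q := by
    have h2 := hpow (q+1)
    rw [h, RatFunc.intDegree_polynomial, natDegree_pow, uH_natDegree hq] at h2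
    push_cast at h2
    linarith
  set D := β.intDegree with hD
  have hk2 : (k:ℤ) ≤ 2 := by rcases hk with rfl | rfl <;> norm_num
  have hk1 : (1:ℤ) ≤ k := by rcases hk with rfl | rfl <;> norm_num
  have hq' : (2:ℤ) ≤ q := by exact_mod_cast hq
  have hD1 : 1 ≤ D := by nlinarith
  have hD2 : D ≤ 1 := by nlinarith
  have hD' : D = 1 := le_antisymm hD2 hD1
  rw [hD'] at h1
  rcases hk with rfl | rfl <;> push_cast at h1 <;> omega


-- counting lemma: fibers bounded by root multiplicities
lemma count_le {K : Type*} [Field K] [Fintype K] {W : K[X]} (hW : W ≠ 0)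
    (Z : Set (K × K))
    (hfib : ∀ x : K, {y : K | (x, y) ∈ Z}.ncard ≤ W.rootMultiplicity x) :
    Z.ncard ≤ W.natDegree := by
  classical
  have hZfin : Z.Finite := Set.toFinite Z
  set ZF : Finset (K × K) := hZfin.toFinset with hZF
  have hcard : Z.ncard = ZF.card := (Set.ncard_eq_toFinset_card Z hZfin)
  rw [hcard]
  have hmem : ∀ p ∈ ZF, p.1 ∈ W.roots.toFinset := by
    intro p hp
    have hpZ : p ∈ Z := by simpa [hZF] using hp
    have h1 : 0 < {y : K | (p.1, y) ∈ Z}.ncard := by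
      rw [Set.ncard_pos (Set.toFinite _)]
      exact ⟨p.2, hpZ⟩
    have h2 : 0 < W.rootMultiplicity p.1 := lt_of_lt_of_le h1 (hfib p.1)
    rw [Multiset.mem_toFinset, mem_roots hW]
    exact (rootMultiplicity_pos hW).mp h2
  rw [Finset.card_eq_sum_card_fiberwise hmem]
  calc ∑ x ∈ W.roots.toFinset, (ZF.filter (fun p => p.1 = x)).card
      ≤ ∑ x ∈ W.roots.toFinset, W.rootMultiplicity x := by
        apply Finset.sum_le_sum
        intro x _
        refine le_trans (le_of_eq ?_) (hfib x)
        rw [Set.ncard_eq_toFinset_card' _]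
        apply Finset.card_bij (fun p _ => p.2)
        · intro p hp
          simp only [Finset.mem_filter] at hp
          simp only [Set.mem_toFinset, Set.mem_setOf_eq]
          rcases hp with ⟨hp1, hp2⟩
          have : p = (x, p.2) := by ext <;> simp [hp2]
          rw [← this]
          simpa [hZF] using hp1
        · intro p hp p' hp' hyp
          simp only [Finset.mem_filter] at hp hp'
          ext
          · rw [hp.2, hp'.2]
          · exact hyp
        · intro y hy
          simp only [Set.mem_toFinset, Set.mem_setOf_eq] at hy
          exact ⟨(x, y), by simp only [Finset.mem_filter, hZF, Set.Finite.mem_toFinset]; exact ⟨hy, trivial⟩, rfl⟩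
    _ = ∑ x ∈ W.roots.toFinset, W.roots.count x := by
        apply Finset.sum_congr rfl; intro x _; rw [count_roots]
    _ = Multiset.card W.roots := Multiset.toFinset_sum_count_eq _
    _ ≤ W.natDegree := card_roots' W

-- fiber into roots of a univariate polynomial
lemma fiber_le {K : Type*} [Field K] {g : K[X]} (hg : g ≠ 0) {s : Set K}
    (h : ∀ y ∈ s, g.IsRoot y) : s.ncard ≤ g.natDegree := by
  classical
  have hsub : s ⊆ ↑g.roots.toFinset := by
    intro y hy
    simp only [Finset.coe_sort_coe, Multiset.mem_toFinset, Finset.mem_coe, mem_roots hg]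
    exact h y hy
  calc s.ncard ≤ (↑g.roots.toFinset : Set K).ncard :=
        Set.ncard_le_ncard hsub (Set.toFinite _)
    _ = g.roots.toFinset.card := Set.ncard_coe_finset _
    _ ≤ Multiset.card g.roots := Multiset.toFinset_card_le _
    _ ≤ g.natDegree := card_roots' g


noncomputable def seqAB {K : Type*} [Field K] (v u : K[X]) : ℕ → K[X] × K[X]
  | 0 => (0, 1)
  | n+1 => ((seqAB v u n).2 - v * (seqAB v u n).1, -u * (seqAB v u n).1)

lemma seqAB_dvd {K : Type*} [Field K] (v u : K[X]) (n : ℕ) :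
    (X^2 + C v * X + C u : K[X][X]) ∣
      (X^n - (C (seqAB v u n).1 * X + C (seqAB v u n).2)) := by
  induction n with
  | zero => simp [seqAB]
  | succ n ih =>
    obtain ⟨s, hs⟩ := ih
    refine ⟨X * s + C (seqAB v u n).1, ?_⟩
    have h2 : (X^(n+1) : K[X][X]) - (C (seqAB v u (n+1)).1 * X + C (seqAB v u (n+1)).2)
        = X * (X^n - (C (seqAB v u n).1 * X + C (seqAB v u n).2))
          + C (seqAB v u n).1 * (X^2 + C v * X + C u) := by
      simp only [seqAB, map_sub, map_neg, map_mul]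
      ring
    rw [h2, hs]
    ring

lemma seqAB_deg {K : Type*} [Field K] {v u : K[X]} (hv : v.natDegree ≤ 1)
    (hu : u.natDegree ≤ 2) (n : ℕ) :
    (seqAB v u n).1.natDegree ≤ n - 1 ∧ (seqAB v u n).2.natDegree ≤ n := by
  induction n with
  | zero => simp [seqAB]
  | succ n ih =>
    obtain ⟨ih1, ih2⟩ := ih
    rcases Nat.eq_zero_or_pos n with rfl | hn
    · constructor <;> simp [seqAB]
    · constructor
      · apply le_trans (natDegree_sub_le _ _)
        simp only [Nat.add_sub_cancel, max_le_iff]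
        refine ⟨ih2, le_trans (natDegree_mul_le) (by omega)⟩
      · apply le_trans (natDegree_mul_le)
        have : (-u).natDegree = u.natDegree := natDegree_neg u
        omega

lemma no_quad_factor {K : Type*} [Field K] {q : ℕ} (hq : 2 ≤ q) (v u : K[X])
    (hdvd : (X^2 + C v * X + C u : K[X][X]) ∣ (X^(q+1) - C (X^q + X))) : False := by
  set F := RatFunc K
  set ι : K[X] →+* F := (algebraMap K[X] F : K[X] →+* F) with hιdef
  have hι : Function.Injective ι := IsFractionRing.injective _ _
  have hdvd2 : (X^2 + C (ι v) * X + C (ι u) : F[X]) ∣ (X^(q+1) - C (ι (X^q + X))) := by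
    have h2 := _root_.map_dvd (mapRingHom ι) hdvd
    simpa only [map_sub, map_add, map_mul, map_pow, coe_mapRingHom, map_C, map_X] using h2
  set Q2 : F[X] := X^2 + C (ι v) * X + C (ι u) with hQ2
  have hQ2nd : Q2.natDegree = 2 := by
    have : Q2 = C 1 * X^2 + C (ι v) * X + C (ι u) := by rw [hQ2, map_one, one_mul]
    rw [this, natDegree_quadratic one_ne_zero]
  have hQ2deg : Q2.degree ≠ 0 := by
    rw [degree_eq_natDegree (fun h0 => by simp [h0] at hQ2nd), hQ2nd]
    decide
  have : Nontrivial (AdjoinRoot Q2) := AdjoinRoot.nontrivial Q2 hQ2deg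
  set φ : F →+* AdjoinRoot Q2 := AdjoinRoot.of Q2 with hφ
  have hφinj : Function.Injective φ := φ.injective
  set y1 := AdjoinRoot.root Q2 with hy1
  have hroot : y1^2 + φ (ι v) * y1 + φ (ι u) = 0 := by
    have h := AdjoinRoot.eval₂_root Q2
    simpa only [hQ2, eval₂_add, eval₂_mul, eval₂_pow, eval₂_X, eval₂_C] using h
  set y2 : AdjoinRoot Q2 := -(φ (ι v)) - y1 with hy2
  have hroot2 : y2^2 + φ (ι v) * y2 + φ (ι u) = 0 := by
    rw [hy2]; linear_combination hroot
  have hprod : y1 * y2 = φ (ι u) := by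
    rw [hy2]; linear_combination -hroot
  obtain ⟨s, hs⟩ := hdvd2
  have key : ∀ t : AdjoinRoot Q2, t^2 + φ (ι v) * t + φ (ι u) = 0 →
      t^(q+1) = φ (ι (X^q + X)) := by
    intro t ht
    have h3 := congrArg (eval₂ φ t) hs
    simp only [eval₂_sub, eval₂_add, eval₂_mul, eval₂_pow, eval₂_X, eval₂_C] at h3
    have hQ2t : eval₂ φ t Q2 = 0 := by
      simp only [hQ2, eval₂_add, eval₂_mul, eval₂_pow, eval₂_X, eval₂_C]
      exact ht
    rw [hQ2t, zero_mul, sub_eq_zero] at h3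
    exact h3
  have h1 := key y1 hroot
  have h2 := key y2 hroot2
  have heqL : φ (ι (u ^ (q+1))) = φ (ι ((X^q+X)^2)) := by
    rw [map_pow, map_pow, map_pow, map_pow, ← hprod, mul_pow, h1, h2, sq]
  have heq : u ^ (q+1) = (X^q + X : K[X])^2 := hι (hφinj heqL)
  have huz : u ≠ 0 := by
    rintro rfl
    rw [zero_pow (by omega)] at heq
    exact pow_ne_zero 2 (uH_ne_zero hq) heq.symm
  have hnd := congrArg natDegree heq
  rw [natDegree_pow' (by
        apply pow_ne_zero; exact leadingCoeff_ne_zero.mpr huz),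
      natDegree_pow' (by
        apply pow_ne_zero; exact leadingCoeff_ne_zero.mpr (uH_ne_zero hq)),
      uH_natDegree hq] at hnd
  have hm : u.natDegree < 2 := by nlinarith [hnd]
  interval_cases h : u.natDegree <;> omega

lemma case_bne [Fintype K] {q : ℕ} (hq : 2 ≤ q)
    (a b c d e f : K) (hb : b ≠ 0) :
    Set.ncard {P : K × K |
      a * P.1 ^ 2 + b * P.2 ^ 2 + c * P.1 * P.2 + d * P.1 + e * P.2 + f = 0 ∧
      P.2 ^ (q + 1) = P.1 ^ q + P.1} ≤ 2 * (q + 1) := by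
  classical
  set Z : Set (K × K) := {P : K × K |
      a * P.1 ^ 2 + b * P.2 ^ 2 + c * P.1 * P.2 + d * P.1 + e * P.2 + f = 0 ∧
      P.2 ^ (q + 1) = P.1 ^ q + P.1} with hZ
  set uH : K[X] := X^q + X with huH
  set v' : K[X] := C (b⁻¹*c) * X + C (b⁻¹*e) with hv'
  set u' : K[X] := C (b⁻¹*a) * X^2 + C (b⁻¹*d) * X + C (b⁻¹*f) with hu'
  have hv'd : v'.natDegree ≤ 1 := natDegree_linear_le
  have hu'd : u'.natDegree ≤ 2 := natDegree_quadratic_le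
  set r1 : K[X] := (seqAB v' u' (q+1)).1 with hr1def
  set b' : K[X] := (seqAB v' u' (q+1)).2 with hb'def
  set r0 : K[X] := b' - uH with hr0def
  have hr1d : r1.natDegree ≤ q := by
    have := (seqAB_deg hv'd hu'd (q+1)).1
    simpa using this
  have hb'd : b'.natDegree ≤ q + 1 := (seqAB_deg hv'd hu'd (q+1)).2
  have hr0d : r0.natDegree ≤ q + 1 := by
    apply le_trans (natDegree_sub_le _ _)
    rw [uH_natDegree hq]; omega
  set W : K[X] := r0^2 - v' * r0 * r1 + u' * r1^2 with hW
  have hWd : W.natDegree ≤ 2*q + 2 := by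
    apply le_trans (natDegree_add_le_of_le
      (natDegree_sub_le_of_le (natDegree_pow_le_of_le 2 hr0d)
        (natDegree_mul_le_of_le (natDegree_mul_le_of_le hv'd hr0d) hr1d))
      (natDegree_mul_le_of_le hu'd (natDegree_pow_le_of_le 2 hr1d)))
    omega
  -- point facts
  have hpt : ∀ x y : K, (x, y) ∈ Z →
      (y^2 + v'.eval x * y + u'.eval x = 0 ∧ y^(q+1) = uH.eval x ∧
       r1.eval x * y + r0.eval x = 0) := by
    intro x y hxy
    obtain ⟨h1, h2⟩ := hxy
    have hbb : b⁻¹ * b = 1 := inv_mul_cancel₀ hb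
    have hv'e : v'.eval x = b⁻¹*c*x + b⁻¹*e := by simp [hv']
    have hu'e : u'.eval x = b⁻¹*a*x^2 + b⁻¹*d*x + b⁻¹*f := by simp [hu']
    have huHe : uH.eval x = x^q + x := by simp [huH]
    have e1 : y^2 + v'.eval x * y + u'.eval x = 0 := by
      rw [hv'e, hu'e]
      linear_combination b⁻¹ * h1 - y^2 * hbb
    have e2 : y^(q+1) = uH.eval x := by rw [huHe]; exact h2
    refine ⟨e1, e2, ?_⟩
    obtain ⟨s, hs⟩ := seqAB_dvd v' u' (q+1)
    have h3 := congrArg (eval₂ (evalRingHom x) y) hs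
    simp only [eval₂_sub, eval₂_add, eval₂_mul, eval₂_pow, eval₂_X, eval₂_C,
      coe_evalRingHom] at h3
    rw [← hr1def, ← hb'def] at h3
    rw [show (eval x v') * y  = v'.eval x * y from rfl] at h3
    rw [e1, zero_mul, sub_eq_zero] at h3
    rw [hr0def, eval_sub]
    rw [← e2, h3]
    ring
  -- W is nonzero
  have hWne : W ≠ 0 := by
    intro hW0
    by_cases hr1z : r1 = 0
    · have hr0z : r0 = 0 := by
        have : W = r0^2 := by rw [hW, hr1z]; ring
        rw [this] at hW0
        exact pow_eq_zero_iff (by norm_num) |>.mp hW0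
      have hb'uH : b' = uH := by
        have := hr0z
        rw [hr0def, sub_eq_zero] at this
        exact this
      apply no_quad_factor hq v' u'
      have hdvd := seqAB_dvd v' u' (q+1)
      rw [← hr1def, ← hb'def, hr1z, hb'uH] at hdvd
      simpa only [map_zero, zero_mul, zero_add, huH] using hdvd
    · set ι : K[X] →+* RatFunc K := (algebraMap K[X] (RatFunc K) : K[X] →+* RatFunc K) with hι
      have hιinj : Function.Injective ι := IsFractionRing.injective _ _
      have hι1 : ι r1 ≠ 0 := fun h0 => hr1z (hιinj (by rw [h0, map_zero]))
      set ystar : RatFunc K := -(ι r0) / (ι r1) with hystar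
      obtain ⟨s, hs⟩ := seqAB_dvd v' u' (q+1)
      have h3 := congrArg (eval₂ ι ystar) hs
      simp only [eval₂_sub, eval₂_add, eval₂_mul, eval₂_pow, eval₂_X, eval₂_C] at h3
      rw [← hr1def, ← hb'def] at h3
      have hA : ι r1 * ystar = -(ι r0) := by
        rw [hystar]; field_simp
      have hWι : ι W = 0 := by rw [hW0, map_zero]
      have hWι' : (ι r0)^2 - ι v' * ι r0 * ι r1 + ι u' * (ι r1)^2 = 0 := by
        rw [← map_pow, ← map_mul, ← map_mul, ← map_pow, ← map_mul, ← map_sub, ← map_add]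
        rw [← hW] at *
        exact hWι
      have hy'' : ystar * ι r1 = -(ι r0) := by rw [mul_comm]; exact hA
      have hsq : (ι r1)^2 ≠ 0 := pow_ne_zero _ hι1
      have hexp : (ystar^2 + ι v' * ystar + ι u') * (ι r1)^2
          = (ι r0)^2 - ι v' * ι r0 * ι r1 + ι u' * (ι r1)^2 := by
        linear_combination (ystar * ι r1 - ι r0 + ι v' * ι r1) * hy''
      have hB : ystar^2 + ι v' * ystar + ι u' = 0 := by
        have := hexp.trans hWι'
        exact (mul_eq_zero.mp this).resolve_right hsq
      rw [hB, zero_mul, sub_eq_zero, hA] at h3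
      apply lemA hq (Or.inl rfl) ystar
      rw [pow_one, h3, ← huH]
      rw [hr0def, hι, map_sub]; ring
  -- fiber bounds
  have hfib : ∀ x : K, {y : K | (x, y) ∈ Z}.ncard ≤ W.rootMultiplicity x := by
    intro x
    rcases Set.eq_empty_or_nonempty {y : K | (x, y) ∈ Z} with hfe | ⟨y₀, hy₀⟩
    · rw [hfe]; simp
    · obtain ⟨e1₀, e2₀, e3₀⟩ := hpt x y₀ hy₀
      by_cases hc : r1.eval x = 0
      · -- double root case
        have hr0x : r0.eval x = 0 := by rw [hc, zero_mul, zero_add] at e3₀; exact e3₀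
        have hdvd2 : (X - C x)^2 ∣ W := by
          have d1 : (X - C x) ∣ r0 := dvd_iff_isRoot.mpr hr0x
          have d2 : (X - C x) ∣ r1 := dvd_iff_isRoot.mpr hc
          rw [hW]
          apply dvd_add
          · apply dvd_sub
            · rw [sq, sq]; exact mul_dvd_mul d1 d1
            · rw [sq]
              calc (X - C x) * (X - C x) ∣ (v' * r0) * r1 :=
                mul_dvd_mul (Dvd.dvd.mul_left d1 v') d2
                _ = v' * r0 * r1 := rfl
          · rw [sq, sq]
            exact Dvd.dvd.mul_left (mul_dvd_mul d2 d2) u'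
        have hmult : 2 ≤ W.rootMultiplicity x := (le_rootMultiplicity_iff hWne).mpr hdvd2
        refine le_trans ?_ hmult
        have : ∀ y ∈ {y : K | (x, y) ∈ Z},
            (X^2 + C (v'.eval x) * X + C (u'.eval x) : K[X]).IsRoot y := by
          intro y hy
          obtain ⟨f1, _, _⟩ := hpt x y hy
          simp only [IsRoot, eval_add, eval_mul, eval_pow, eval_X, eval_C]
          linear_combination f1
        refine le_trans (fiber_le ?_ this) ?_
        · intro h0
          have := congrArg natDegree h0
          rw [show (X^2 + C (v'.eval x) * X + C (u'.eval x) : K[X])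
              = C 1 * X^2 + C (v'.eval x) * X + C (u'.eval x) by rw [map_one, one_mul],
            natDegree_quadratic one_ne_zero] at this
          simp at this
        · rw [show (X^2 + C (v'.eval x) * X + C (u'.eval x) : K[X])
              = C 1 * X^2 + C (v'.eval x) * X + C (u'.eval x) by rw [map_one, one_mul],
            natDegree_quadratic one_ne_zero]
      · -- unique y case
        have huniq : {y : K | (x, y) ∈ Z} ⊆ {-(r0.eval x) / (r1.eval x)} := by
          intro y hy
          obtain ⟨_, _, f3⟩ := hpt x y hy
          simp only [Set.mem_singleton_iff]
          field_simp
          linear_combination f3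
        have h1le : {y : K | (x, y) ∈ Z}.ncard ≤ 1 := by
          refine le_trans (Set.ncard_le_ncard huniq (Set.finite_singleton _)) ?_
          simp
        refine le_trans h1le ?_
        rw [Nat.one_le_iff_ne_zero, ← Nat.pos_iff_ne_zero]
        rw [rootMultiplicity_pos hWne]
        show W.eval x = 0
        rw [hW]
        simp only [eval_add, eval_sub, eval_mul, eval_pow]
        linear_combination (r1.eval x)^2 * e1₀ + (r0.eval x - r1.eval x * y₀ - v'.eval x * r1.eval x) * e3₀
  calc Z.ncard ≤ W.natDegree := count_le hWne Z hfib
    _ ≤ 2 * (q+1) := by omega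

lemma case_lin [Fintype K] {q : ℕ} (hq : 2 ≤ q)
    (a c d e f : K) (hce : ¬(c = 0 ∧ e = 0)) :
    Set.ncard {P : K × K |
      a * P.1 ^ 2 + 0 * P.2 ^ 2 + c * P.1 * P.2 + d * P.1 + e * P.2 + f = 0 ∧
      P.2 ^ (q + 1) = P.1 ^ q + P.1} ≤ 2 * (q + 1) := by
  classical
  set Z : Set (K × K) := {P : K × K |
      a * P.1 ^ 2 + 0 * P.2 ^ 2 + c * P.1 * P.2 + d * P.1 + e * P.2 + f = 0 ∧
      P.2 ^ (q + 1) = P.1 ^ q + P.1} with hZ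
  set uH : K[X] := X^q + X with huH
  set v : K[X] := C c * X + C e with hv
  set uQ : K[X] := C a * X^2 + C d * X + C f with huQ
  have hvne : v ≠ 0 := by
    intro h0
    apply hce
    constructor
    · have : v.coeff 1 = c := by simp [hv]
      rw [h0] at this; simpa using this.symm
    · have : v.coeff 0 = e := by simp [hv]
      rw [h0] at this; simpa using this.symm
  set W : K[X] := v^(q+1) * uH - (-uQ)^(q+1) with hW
  have hWd : W.natDegree ≤ 2*q + 2 := by
    apply le_trans (natDegree_sub_le_of_le
      (natDegree_mul_le_of_le (natDegree_pow_le_of_le (q+1) natDegree_linear_le)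
        (le_of_eq (uH_natDegree hq)))
      (natDegree_pow_le_of_le (m := 2) (q+1) (by
        rw [natDegree_neg]; exact natDegree_quadratic_le)))
    omega
  have hpt : ∀ x y : K, (x, y) ∈ Z →
      (v.eval x * y + uQ.eval x = 0 ∧ y^(q+1) = uH.eval x) := by
    intro x y hxy
    obtain ⟨h1, h2⟩ := hxy
    constructor
    · simp only [hv, huQ, eval_add, eval_mul, eval_pow, eval_C, eval_X]
      linear_combination h1
    · simp only [huH, eval_add, eval_pow, eval_X]
      exact h2
  have hWev : ∀ x y : K, (x, y) ∈ Z → W.eval x = 0 := by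
    intro x y hxy
    obtain ⟨e1, e2⟩ := hpt x y hxy
    have h4 : (-(uQ.eval x))^(q+1) = (v.eval x * y)^(q+1) := by
      rw [show v.eval x * y = -(uQ.eval x) by linear_combination e1]
    rw [hW]
    simp only [eval_sub, eval_mul, eval_pow, eval_neg]
    rw [h4, ← e2, mul_pow]
    ring
  have hWne : W ≠ 0 := by
    intro hW0
    have hW0' : (-uQ)^(q+1) = v^(q+1) * uH := by
      have := sub_eq_zero.mp hW0
      exact this.symm
    set ι : K[X] →+* RatFunc K := (algebraMap K[X] (RatFunc K) : K[X] →+* RatFunc K) with hι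
    have hιv : ι v ≠ 0 := fun h0 =>
      hvne ((map_eq_zero_iff ι (IsFractionRing.injective _ _)).mp h0)
    apply lemA hq (Or.inl rfl) (ι (-uQ) / ι v)
    rw [pow_one, div_pow, ← map_pow, hW0', map_mul, map_pow, mul_comm, ← huH]
    exact mul_div_cancel_right₀ _ (pow_ne_zero _ hιv)
  have hfib : ∀ x : K, {y : K | (x, y) ∈ Z}.ncard ≤ W.rootMultiplicity x := by
    intro x
    rcases Set.eq_empty_or_nonempty {y : K | (x, y) ∈ Z} with hfe | ⟨y₀, hy₀⟩
    · rw [hfe]; simp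
    · obtain ⟨e1₀, e2₀⟩ := hpt x y₀ hy₀
      by_cases hvx : v.eval x = 0
      · have huQx : uQ.eval x = 0 := by rw [hvx, zero_mul, zero_add] at e1₀; exact e1₀
        have hdvd2 : (X - C x)^(q+1) ∣ W := by
          rw [hW]
          apply dvd_sub
          · exact Dvd.dvd.mul_right
              (pow_dvd_pow_of_dvd (dvd_iff_isRoot.mpr hvx) (q+1)) uH
          · apply pow_dvd_pow_of_dvd
            apply dvd_iff_isRoot.mpr
            simp [IsRoot, huQx]
        have hmult : q + 1 ≤ W.rootMultiplicity x := (le_rootMultiplicity_iff hWne).mpr hdvd2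
        refine le_trans ?_ hmult
        have hroots : ∀ y ∈ {y : K | (x, y) ∈ Z},
            (X^(q+1) - C (uH.eval x) : K[X]).IsRoot y := by
          intro y hy
          obtain ⟨_, f2⟩ := hpt x y hy
          simp only [IsRoot, eval_sub, eval_pow, eval_X, eval_C]
          rw [f2]; ring
        refine le_trans (fiber_le ?_ hroots) ?_
        · intro h0
          have := congrArg natDegree h0
          rw [natDegree_X_pow_sub_C] at this
          simp at this
        · rw [natDegree_X_pow_sub_C]
      · have huniq : {y : K | (x, y) ∈ Z} ⊆ {-(uQ.eval x) / (v.eval x)} := by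
          intro y hy
          obtain ⟨f1, _⟩ := hpt x y hy
          simp only [Set.mem_singleton_iff]
          field_simp
          linear_combination f1
        have h1le : {y : K | (x, y) ∈ Z}.ncard ≤ 1 := by
          refine le_trans (Set.ncard_le_ncard huniq (Set.finite_singleton _)) ?_
          simp
        refine le_trans h1le ?_
        rw [Nat.one_le_iff_ne_zero, ← Nat.pos_iff_ne_zero, rootMultiplicity_pos hWne]
        exact hWev x y₀ hy₀
  calc Z.ncard ≤ W.natDegree := count_le hWne Z hfib
    _ ≤ 2 * (q+1) := by omega

lemma case_const [Fintype K] {q : ℕ} (hq : 2 ≤ q)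
    (a d f : K) (hne : ¬(a = 0 ∧ d = 0 ∧ f = 0)) :
    Set.ncard {P : K × K |
      a * P.1 ^ 2 + 0 * P.2 ^ 2 + 0 * P.1 * P.2 + d * P.1 + 0 * P.2 + f = 0 ∧
      P.2 ^ (q + 1) = P.1 ^ q + P.1} ≤ 2 * (q + 1) := by
  classical
  set Z : Set (K × K) := {P : K × K |
      a * P.1 ^ 2 + 0 * P.2 ^ 2 + 0 * P.1 * P.2 + d * P.1 + 0 * P.2 + f = 0 ∧
      P.2 ^ (q + 1) = P.1 ^ q + P.1} with hZ
  set uH : K[X] := X^q + X with huH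
  set uQ : K[X] := C a * X^2 + C d * X + C f with huQ
  have huQne : uQ ≠ 0 := by
    intro h0
    apply hne
    refine ⟨?_, ?_, ?_⟩
    · have : uQ.coeff 2 = a := by simp [huQ, coeff_C]
      rw [h0] at this; simpa using this.symm
    · have : uQ.coeff 1 = d := by simp [huQ, coeff_C]
      rw [h0] at this; simpa using this.symm
    · have : uQ.coeff 0 = f := by simp [huQ, coeff_C]
      rw [h0] at this; simpa using this.symm
  set W : K[X] := uQ^(q+1) with hW
  have hWne : W ≠ 0 := pow_ne_zero _ huQne
  have hWd : W.natDegree ≤ 2*q + 2 := by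
    apply le_trans (natDegree_pow_le_of_le (q+1) natDegree_quadratic_le)
    omega
  have hfib : ∀ x : K, {y : K | (x, y) ∈ Z}.ncard ≤ W.rootMultiplicity x := by
    intro x
    rcases Set.eq_empty_or_nonempty {y : K | (x, y) ∈ Z} with hfe | ⟨y₀, hy₀⟩
    · rw [hfe]; simp
    · obtain ⟨h1, h2⟩ := hy₀
      have huQx : uQ.eval x = 0 := by
        simp only [huQ, eval_add, eval_mul, eval_pow, eval_C, eval_X]
        linear_combination h1
      have hdvd2 : (X - C x)^(q+1) ∣ W := by
        rw [hW]
        exact pow_dvd_pow_of_dvd (dvd_iff_isRoot.mpr huQx) (q+1)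
      have hmult : q + 1 ≤ W.rootMultiplicity x := (le_rootMultiplicity_iff hWne).mpr hdvd2
      refine le_trans ?_ hmult
      have hroots : ∀ y ∈ {y : K | (x, y) ∈ Z},
          (X^(q+1) - C (x^q + x) : K[X]).IsRoot y := by
        intro y hy
        obtain ⟨_, f2⟩ := hy
        simp only [IsRoot, eval_sub, eval_pow, eval_X, eval_C]
        rw [f2]; ring
      refine le_trans (fiber_le ?_ hroots) ?_
      · intro h0
        have := congrArg natDegree h0
        rw [natDegree_X_pow_sub_C] at this
        simp at this
      · rw [natDegree_X_pow_sub_C]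
  calc Z.ncard ≤ W.natDegree := count_le hWne Z hfib
    _ ≤ 2 * (q+1) := by omega


end helpers

open MvPolynomial in
theorem stmt_16 (ℓ : ℕ) (hℓ : IsPrimePow ℓ)
    (K : Type*) [Field K] [Fintype K] (hK : Fintype.card K = ℓ ^ 6)
    (a b c d e f : K)
    (hne : ¬(a = 0 ∧ b = 0 ∧ c = 0 ∧ d = 0 ∧ e = 0 ∧ f = 0))
    (hnotdvd : ¬((X 1 ^ (ℓ + 1) - X 0 ^ ℓ - X 0 : MvPolynomial (Fin 2) K) ∣
      (C a * X 0 ^ 2 + C b * X 1 ^ 2 + C c * X 0 * X 1 + C d * X 0 + C e * X 1 + C f))) :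
    Set.ncard {P : K × K |
      a * P.1 ^ 2 + b * P.2 ^ 2 + c * P.1 * P.2 + d * P.1 + e * P.2 + f = 0 ∧
      P.2 ^ (ℓ + 1) = P.1 ^ ℓ + P.1} ≤ 2 * (ℓ + 1) := by
  have hq : 2 ≤ ℓ := hℓ.two_le
  by_cases hb : b = 0
  · subst hb
    by_cases hce : c = 0 ∧ e = 0
    · obtain ⟨rfl, rfl⟩ := hce
      have hne' : ¬(a = 0 ∧ d = 0 ∧ f = 0) := by tauto
      exact case_const hq a d f hne'
    · exact case_lin hq a c d e f hce
  · exact case_bne hq a b c d e f hb
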